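/- Let alpha and beta be sequences in a field k whose ordinary generating functions Z_alpha(T) and Z_beta(T) are rational. Then the generating function of the Hadamard product sequence (alpha_n * beta_n)_{n>=0} is also rational. -/

import Mathlib

/-- A formal power series over a field `K` is rational if there are polynomials
`P, Q` with `Q(0) ≠ 0` and `Q · f = P` as formal power series. -/
def IsRationalSeries {K : Type*} [Field K] (f : PowerSeries K) : Prop :=
  ∃ P Q : Polynomial K, Q.coeff 0 ≠ 0 ∧ (Q : PowerSeries K) * f = (P : PowerSeries K)

open Finset

/-- The coefficient identity coming from `Q * f = P`. -/
private lemma coeff_identity {K : Type*} [Field K] (α : ℕ → K) (P Q : Polynomial K)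
    (hPQ : (Q : PowerSeries K) * PowerSeries.mk α = (P : PowerSeries K)) (m : ℕ) :
    ∑ j ∈ Finset.range (m + 1), Q.coeff j * α (m - j) = P.coeff m := by
  have := congrArg (PowerSeries.coeff m) hPQ
  rw [PowerSeries.coeff_mul, Finset.Nat.sum_antidiagonal_eq_sum_range_succ_mk] at this
  simpa [Polynomial.coeff_coe, PowerSeries.coeff_mk] using this

/-- If the generating series of `α` is rational, all shifts of `α` lie in a
finitely generated submodule of `ℕ → K`. -/
private lemma exists_fg_shifts {K : Type*} [Field K] {α : ℕ → K}
    (hα : IsRationalSeries (PowerSeries.mk α)) :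
    ∃ U : Submodule K (ℕ → K), U.FG ∧ ∀ i, (fun n => α (n + i)) ∈ U := by
  obtain ⟨P, Q, hQ0, hPQ⟩ := hα
  set dQ := Q.natDegree with hdQ
  set M := P.natDegree + 1 + dQ with hM
  refine ⟨Submodule.span K (Set.range fun k : Fin (M + 1) => fun n => α (n + (k : ℕ))),
    Submodule.fg_span (Set.finite_range _), ?_⟩
  intro i
  induction i using Nat.strong_induction_on with
  | _ i ih =>
    by_cases hi : i ≤ M
    · exact Submodule.subset_span ⟨⟨i, by omega⟩, rfl⟩
    · push_neg at hi
      have hrec : ∀ n, α (n + i) =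
          ∑ j ∈ Finset.range dQ, (-(Q.coeff (j + 1)) / Q.coeff 0) * α (n + (i - (j + 1))) := by
        intro n
        have hkey := coeff_identity α P Q hPQ (n + i)
        rw [Polynomial.coeff_eq_zero_of_natDegree_lt (by omega),
          Finset.sum_range_succ'] at hkey
        have hsub : ∑ j ∈ Finset.range (n + i), Q.coeff (j + 1) * α (n + i - (j + 1)) =
            ∑ j ∈ Finset.range dQ, Q.coeff (j + 1) * α (n + i - (j + 1)) := by
          refine (Finset.sum_subset (Finset.range_subset_range.mpr (by omega)) ?_).symm
          intro j _ hj
          rw [Finset.mem_range, not_lt] at hj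
          rw [Polynomial.coeff_eq_zero_of_natDegree_lt (by omega), zero_mul]
        rw [hsub, Nat.sub_zero] at hkey
        refine mul_left_cancel₀ hQ0 ?_
        rw [Finset.mul_sum]
        have hterm : ∀ j ∈ Finset.range dQ,
            Q.coeff 0 * (-(Q.coeff (j + 1)) / Q.coeff 0 * α (n + (i - (j + 1)))) =
            -(Q.coeff (j + 1) * α (n + i - (j + 1))) := by
          intro j hj
          rw [Finset.mem_range] at hj
          rw [show n + (i - (j + 1)) = n + i - (j + 1) by omega]
          field_simp
        rw [Finset.sum_congr rfl hterm]
        rw [Finset.sum_neg_distrib]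
        linear_combination hkey
      have heq : (fun n => α (n + i)) =
          ∑ j ∈ Finset.range dQ,
            (-(Q.coeff (j + 1)) / Q.coeff 0) • (fun n => α (n + (i - (j + 1)))) := by
        funext n
        rw [Finset.sum_apply]
        simpa using hrec n
      rw [heq]
      exact Submodule.sum_mem _ fun j hj => Submodule.smul_mem _ _
        (ih (i - (j + 1)) (by omega))

/-- From all shifts lying in an FG submodule we get a linear recurrence. -/
private lemma rec_of_fg {K : Type*} [Field K] {α : ℕ → K} (U : Submodule K (ℕ → K))
    (hfg : U.FG) (hmem : ∀ i, (fun n => α (n + i)) ∈ U) :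
    ∃ (d : ℕ) (g : ℕ → K), g d ≠ 0 ∧
      ∀ n, ∑ i ∈ Finset.range (d + 1), g i * α (n + i) = 0 := by
  classical
  haveI : Module.Finite K U := Module.Finite.iff_fg.mpr hfg
  set m := Module.finrank K U with hm
  set v : Fin (m + 1) → U := fun i => ⟨fun n => α (n + (i : ℕ)), hmem i⟩ with hv
  have hnli : ¬ LinearIndependent K v := by
    intro h
    have h2 := h.fintype_card_le_finrank
    rw [Fintype.card_fin, ← hm] at h2
    omega
  obtain ⟨g, hsum, i0, hi0⟩ := Fintype.not_linearIndependent_iff.mp hnli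
  have hsum' : ∀ n, ∑ i : Fin (m + 1), g i * α (n + (i : ℕ)) = 0 := by
    intro n
    have := congrArg (fun x : U => (x : ℕ → K) n) hsum
    simpa [v, Submodule.coe_sum] using this
  set s : Finset (Fin (m + 1)) := Finset.univ.filter (fun i => g i ≠ 0) with hs
  have hne : s.Nonempty := ⟨i0, by simp [s, hi0]⟩
  set D := s.max' hne with hD
  have hgD : g D ≠ 0 := (Finset.mem_filter.mp (s.max'_mem hne)).2
  refine ⟨(D : ℕ), fun j => if h : j < m + 1 then g ⟨j, h⟩ else 0, ?_, ?_⟩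
  · simpa [D.isLt] using hgD
  · intro n
    have h1 : ∑ i ∈ Finset.range ((D : ℕ) + 1),
        (fun j => if h : j < m + 1 then g ⟨j, h⟩ else 0) i * α (n + i) =
        ∑ i ∈ Finset.range (m + 1),
        (fun j => if h : j < m + 1 then g ⟨j, h⟩ else 0) i * α (n + i) := by
      refine Finset.sum_subset (Finset.range_subset_range.mpr (by omega)) ?_
      intro j hj hj'
      rw [Finset.mem_range] at hj
      rw [Finset.mem_range, not_lt] at hj'
      simp only [dif_pos hj]
      have : g ⟨j, hj⟩ = 0 := by
        by_contra hgj
        have : (⟨j, hj⟩ : Fin (m + 1)) ∈ s := by simp [s, hgj]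
        have := s.le_max' _ this
        have : j ≤ (D : ℕ) := by exact_mod_cast this
        omega
      rw [this, zero_mul]
    rw [h1, Finset.sum_range fun i => _]
    simpa [Fin.is_le] using hsum' n

/-- A linear recurrence yields rationality of the generating series. -/
private lemma rational_of_rec {K : Type*} [Field K] {α : ℕ → K} {d : ℕ} {g : ℕ → K}
    (hg : g d ≠ 0) (hrec : ∀ n, ∑ i ∈ Finset.range (d + 1), g i * α (n + i) = 0) :
    IsRationalSeries (PowerSeries.mk α) := by
  set Q : Polynomial K :=
    ∑ j ∈ Finset.range (d + 1), Polynomial.C (g (d - j)) * Polynomial.X ^ j with hQdef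
  have hQc : ∀ j, Q.coeff j = if j < d + 1 then g (d - j) else 0 := by
    intro j
    rw [hQdef, Polynomial.finset_sum_coeff]
    simp only [Polynomial.coeff_C_mul, Polynomial.coeff_X_pow, mul_ite, mul_one, mul_zero]
    rw [Finset.sum_ite_eq (Finset.range (d + 1)) j (fun i => g (d - i))]
    simp
  have hzero : ∀ n, d ≤ n →
      (PowerSeries.coeff n) ((Q : PowerSeries K) * PowerSeries.mk α) = 0 := by
    intro n hn
    rw [PowerSeries.coeff_mul, Finset.Nat.sum_antidiagonal_eq_sum_range_succ_mk]
    simp only [Polynomial.coeff_coe, PowerSeries.coeff_mk]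
    have h1 : ∑ j ∈ Finset.range (n + 1), Q.coeff j * α (n - j) =
        ∑ j ∈ Finset.range (d + 1), Q.coeff j * α (n - j) := by
      refine (Finset.sum_subset (Finset.range_subset_range.mpr (by omega)) ?_).symm
      intro j _ hj
      rw [Finset.mem_range, not_lt] at hj
      rw [hQc, if_neg (by omega), zero_mul]
    rw [h1]
    have h2 : ∑ j ∈ Finset.range (d + 1), Q.coeff j * α (n - j) =
        ∑ j ∈ Finset.range (d + 1), g (d - j) * α ((n - d) + (d - j)) := by
      refine Finset.sum_congr rfl fun j hj => ?_
      rw [Finset.mem_range] at hj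
      rw [hQc, if_pos (by omega), show n - j = n - d + (d - j) by omega]
    rw [h2]
    have h3 := Finset.sum_range_reflect (fun j => g j * α ((n - d) + j)) (d + 1)
    simp only [Nat.add_sub_cancel] at h3
    rw [h3]
    exact hrec (n - d)
  refine ⟨PowerSeries.trunc d ((Q : PowerSeries K) * PowerSeries.mk α), Q, ?_, ?_⟩
  · rw [hQc]
    simpa using hg
  · ext n
    rw [Polynomial.coeff_coe, PowerSeries.coeff_trunc]
    by_cases hn : n < d
    · rw [if_pos hn]
    · rw [if_neg hn, hzero n (by omega)]

/-- If the generating functions of the sequences `α` and `β` are rational, then so is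
the generating function of the Hadamard product sequence `(α_n * β_n)`. -/
theorem hadamard_product_rational {K : Type*} [Field K] (α β : ℕ → K)
    (hα : IsRationalSeries (PowerSeries.mk α)) (hβ : IsRationalSeries (PowerSeries.mk β)) :
    IsRationalSeries (PowerSeries.mk fun n => α n * β n) := by
  obtain ⟨Uα, hUαfg, hUα⟩ := exists_fg_shifts hα
  obtain ⟨Uβ, hUβfg, hUβ⟩ := exists_fg_shifts hβ
  have hmem : ∀ i, (fun n => α (n + i) * β (n + i)) ∈ Uα * Uβ := by
    intro i
    exact Submodule.mul_mem_mul (hUα i) (hUβ i)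
  obtain ⟨d, g, hg, hrec⟩ :=
    rec_of_fg (α := fun n => α n * β n) (Uα * Uβ) (hUαfg.mul hUβfg) hmem
  exact rational_of_rec hg hrec
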